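/- For every β ∈ [0,1], (1 - 1/e)·𝟙[β ≤ 1/e] + (1 + β·log β)·𝟙[β > 1/e] ≤ β + (1 - β)·(1 - 1/e), with strict inequality for β ∈ (0,1). Here 1 + β·log β is interpreted via the convention 0·log 0 = 0. -/
import Mathlib

/-- The tight asymptotic competitive ratio as a function of the EFET β
(with the convention `0 * log 0 = 0`, which holds since `Real.log 0 = 0`). -/
noncomputable def G (β : ℝ) : ℝ :=
  if β ≤ 1 / Real.exp 1 then 1 - 1 / Real.exp 1 else 1 + β * Real.log β

theorem G_le_linear_bound (β : ℝ) (hβ : β ∈ Set.Icc (0:ℝ) 1) :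
    G β ≤ β + (1 - β) * (1 - 1 / Real.exp 1) ∧
    (β ∈ Set.Ioo (0:ℝ) 1 → G β < β + (1 - β) * (1 - 1 / Real.exp 1)) := by
  obtain ⟨h0, h1⟩ := hβ
  have he : (0:ℝ) < Real.exp 1 := Real.exp_pos 1
  have he1 : 1 < Real.exp 1 := by
    have := Real.add_one_lt_exp (one_ne_zero : (1:ℝ) ≠ 0)
    linarith
  have hinv : (0:ℝ) < 1 / Real.exp 1 := by positivity
  constructor
  · unfold G
    split_ifs with h
    · have : 0 ≤ β / Real.exp 1 := by positivity
      rw [div_eq_mul_inv] at this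
      nlinarith [mul_pos he he]
    · push_neg at h
      have hb0 : 0 < β := lt_trans hinv h
      have hlog : Real.log β ≤ β - 1 := Real.log_le_sub_one_of_pos hb0
      have h2 : β * Real.log β ≤ β * (β - 1) :=
        mul_le_mul_of_nonneg_left hlog h0
      have h3 : 1 / Real.exp 1 * Real.exp 1 = 1 := by
        field_simp
      nlinarith [mul_nonneg (sub_nonneg.2 h1) (sub_nonneg.2 h.le), mul_pos he he]
  · rintro ⟨hb0, hb1⟩
    unfold G
    split_ifs with h
    · have : 0 < β / Real.exp 1 := by positivity
      rw [div_eq_mul_inv] at this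
      nlinarith [mul_pos he he]
    · push_neg at h
      have hlog : Real.log β < β - 1 := Real.log_lt_sub_one_of_pos hb0 hb1.ne
      have h2 : β * Real.log β < β * (β - 1) :=
        (mul_lt_mul_iff_right₀ hb0).2 hlog
      have h3 : 1 / Real.exp 1 * Real.exp 1 = 1 := by field_simp
      nlinarith [mul_nonneg (sub_nonneg.2 hb1.le) (sub_nonneg.2 h.le), mul_pos he he]
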